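/- Let (V, σ) be a pre-braided vector space (σ : V ⊗ V → V ⊗ V satisfying the Yang–Baxter equation) and let ε : V → k be a braided character, i.e. (ε ⊗ ε) ∘ σ = ε ⊗ ε. Then the maps d_n : V^⊗n → V^⊗(n−1) defined by d_n = Σ_{i=1}^{n} (−1)^{i−1} ε₁ ∘ T^σ_{p_{i,n}}, where p_{i,n} is the permutation moving the i-th strand to the leftmost position and T^σ is the corresponding braid-lift acting via σ, satisfy d_{n−1} ∘ d_n = 0. -/

import Mathlib

open TensorProduct

universe u
variable {R V : Type u} [CommRing R] [AddCommGroup V] [Module R V]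

/-- `σ ⊗ id` as an endomorphism of `V ⊗ (V ⊗ V)`. -/
noncomputable def sigma1 (σ : V ⊗[R] V →ₗ[R] V ⊗[R] V) :
    V ⊗[R] (V ⊗[R] V) →ₗ[R] V ⊗[R] (V ⊗[R] V) :=
  (TensorProduct.assoc R V V V).toLinearMap ∘ₗ (LinearMap.rTensor V σ) ∘ₗ
    (TensorProduct.assoc R V V V).symm.toLinearMap

/-- `id ⊗ σ` as an endomorphism of `V ⊗ (V ⊗ V)`. -/
noncomputable def sigma2 (σ : V ⊗[R] V →ₗ[R] V ⊗[R] V) :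
    V ⊗[R] (V ⊗[R] V) →ₗ[R] V ⊗[R] (V ⊗[R] V) :=
  LinearMap.lTensor V σ

/-- The Yang–Baxter equation for `σ : V ⊗ V → V ⊗ V`. -/
def YangBaxter (σ : V ⊗[R] V →ₗ[R] V ⊗[R] V) : Prop :=
  sigma1 σ ∘ₗ sigma2 σ ∘ₗ sigma1 σ = sigma2 σ ∘ₗ sigma1 σ ∘ₗ sigma2 σ

variable (R V) in
/-- The iterated tensor power `V^{⊗n}` (left-nested: `TP 0 = R`, `TP (n+1) = V ⊗ TP n`),
bundled as an object of `ModuleCat R` so that the recursion carries its instances. -/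
noncomputable def TPb : ℕ → ModuleCat.{u} R
  | 0 => ModuleCat.of R R
  | n + 1 => ModuleCat.of R (V ⊗[R] (TPb n))

variable (R V) in
/-- The iterated tensor power `V^{⊗n}` as a type. -/
noncomputable abbrev TP (n : ℕ) : Type u := (TPb R V n : Type u)

/-- The lift `σᵢ = id^{⊗(i−1)} ⊗ σ ⊗ id^{⊗(n−i−1)}` of `σ` to `V^{⊗n}`, acting on the
tensor factors `i` and `i+1` (1-indexed); it is the identity for out-of-range `i`. -/
noncomputable def sig (σ : V ⊗[R] V →ₗ[R] V ⊗[R] V) :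
    (n : ℕ) → (i : ℕ) → TP R V n →ₗ[R] TP R V n
  | 0, _ => LinearMap.id
  | 1, _ => LinearMap.id
  | n+2, 0 => LinearMap.id
  | n+2, 1 =>
      (TensorProduct.assoc R V V (TP R V n)).toLinearMap ∘ₗ
        (LinearMap.rTensor (TP R V n) σ) ∘ₗ
        (TensorProduct.assoc R V V (TP R V n)).symm.toLinearMap
  | n+2, i+2 => LinearMap.lTensor V (sig σ (n+1) (i+1))

/-- The braid lift `T^σ_{p_{i,n}} = σ₁ ∘ σ₂ ∘ ⋯ ∘ σ_{i−1}` of the permutation `p_{i,n}`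
moving the `i`-th strand to the leftmost position. -/
noncomputable def slide (σ : V ⊗[R] V →ₗ[R] V ⊗[R] V) (n : ℕ) :
    (i : ℕ) → TP R V n →ₗ[R] TP R V n
  | 0 => LinearMap.id
  | 1 => LinearMap.id
  | i+2 => slide σ n (i+1) ∘ₗ sig σ n (i+1)

/-- `ε₁ = ε ⊗ id^{⊗n}` : applying `ε` to the first tensor factor of `V^{⊗(n+1)}`. -/
noncomputable def eps1 (ε : V →ₗ[R] R) (n : ℕ) : TP R V (n+1) →ₗ[R] TP R V n :=
  (TensorProduct.lid R (TP R V n)).toLinearMap ∘ₗ LinearMap.rTensor (TP R V n) ε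

/-- The face map `d_{n+1;i} = ε₁ ∘ T^σ_{p_{i,n+1}} : V^{⊗(n+1)} → V^{⊗n}`. -/
noncomputable def face (σ : V ⊗[R] V →ₗ[R] V ⊗[R] V) (ε : V →ₗ[R] R) (n : ℕ) (i : ℕ) :
    TP R V (n+1) →ₗ[R] TP R V n :=
  eps1 ε n ∘ₗ slide σ (n+1) i

/-- The braided differential `d_{n+1} = Σ_{i=1}^{n+1} (−1)^{i−1} ε₁ ∘ T^σ_{p_{i,n+1}}`. -/
noncomputable def dbr (σ : V ⊗[R] V →ₗ[R] V ⊗[R] V) (ε : V →ₗ[R] R) (n : ℕ) :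
    TP R V (n+1) →ₗ[R] TP R V n :=
  ∑ i ∈ Finset.range (n+1), ((-1 : R)^i) • face σ ε n (i+1)

namespace BraidedAux

open LinearMap

section Generic
variable {A A' B B' C C' M N M' N' P : Type u}
  [AddCommGroup A] [Module R A] [AddCommGroup A'] [Module R A']
  [AddCommGroup B] [Module R B] [AddCommGroup B'] [Module R B']
  [AddCommGroup C] [Module R C] [AddCommGroup C'] [Module R C']
  [AddCommGroup M] [Module R M] [AddCommGroup N] [Module R N]
  [AddCommGroup M'] [Module R M'] [AddCommGroup N'] [Module R N']
  [AddCommGroup P] [Module R P]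

lemma symm_conj₂ (e : M ≃ₗ[R] N) (e' : M' ≃ₗ[R] N') (f : M →ₗ[R] M') (g : N →ₗ[R] N')
    (h : g ∘ₗ e.toLinearMap = e'.toLinearMap ∘ₗ f) :
    e'.symm.toLinearMap ∘ₗ g = f ∘ₗ e.symm.toLinearMap := by
  apply LinearMap.ext; intro x
  have h1 := LinearMap.congr_fun h (e.symm x)
  simp only [LinearMap.coe_comp, Function.comp_apply, LinearEquiv.coe_coe,
    LinearEquiv.apply_symm_apply] at h1
  simp only [LinearMap.coe_comp, Function.comp_apply, LinearEquiv.coe_coe]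
  rw [h1, LinearEquiv.symm_apply_apply]

lemma equiv_cancel (e : M ≃ₗ[R] N) {f g : P →ₗ[R] M}
    (h : e.toLinearMap ∘ₗ f = e.toLinearMap ∘ₗ g) : f = g := by
  apply LinearMap.ext; intro x
  exact e.injective (LinearMap.congr_fun h x)

lemma assoc_nat_left (f : A →ₗ[R] A') :
    LinearMap.rTensor (B ⊗[R] C) f ∘ₗ (TensorProduct.assoc R A B C).toLinearMap
      = (TensorProduct.assoc R A' B C).toLinearMap
          ∘ₗ LinearMap.rTensor C (LinearMap.rTensor B f) := by
  apply TensorProduct.ext_threefold; intro x y z; simp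

lemma assoc_nat_mid (g : B →ₗ[R] B') :
    LinearMap.lTensor A (LinearMap.rTensor C g) ∘ₗ (TensorProduct.assoc R A B C).toLinearMap
      = (TensorProduct.assoc R A B' C).toLinearMap
          ∘ₗ LinearMap.rTensor C (LinearMap.lTensor A g) := by
  apply TensorProduct.ext_threefold; intro x y z; simp

lemma assoc_nat_right (h : C →ₗ[R] C') :
    LinearMap.lTensor A (LinearMap.lTensor B h) ∘ₗ (TensorProduct.assoc R A B C).toLinearMap
      = (TensorProduct.assoc R A B C').toLinearMap
          ∘ₗ LinearMap.lTensor (A ⊗[R] B) h := by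
  apply TensorProduct.ext_threefold; intro x y z; simp

lemma lid_nat (f : M →ₗ[R] N) :
    f ∘ₗ (TensorProduct.lid R M).toLinearMap
      = (TensorProduct.lid R N).toLinearMap ∘ₗ LinearMap.lTensor R f := by
  apply TensorProduct.ext'; intro r x; simp

end Generic

section Sig
variable (σ : V ⊗[R] V →ₗ[R] V ⊗[R] V) (ε : V →ₗ[R] R)

/-- σ acting on the first two factors of `V ⊗ (V ⊗ W)`. -/
noncomputable def s1W (W : Type u) [AddCommGroup W] [Module R W] :
    V ⊗[R] (V ⊗[R] W) →ₗ[R] V ⊗[R] (V ⊗[R] W) :=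
  (TensorProduct.assoc R V V W).toLinearMap ∘ₗ (LinearMap.rTensor W σ) ∘ₗ
    (TensorProduct.assoc R V V W).symm.toLinearMap

lemma sig_two_one (n : ℕ) : sig σ (n+2) 1 = s1W σ (TP R V n) := rfl

lemma sig_succ_succ (n i : ℕ) :
    sig σ (n+2) (i+2) = LinearMap.lTensor V (sig σ (n+1) (i+1)) := rfl

lemma sig_zero (n : ℕ) : sig σ n 0 = LinearMap.id := by
  cases n with | zero => rfl | succ m => cases m <;> rfl

lemma sig_oob : ∀ n i, n ≤ i → sig σ n i = LinearMap.id
  | 0, i, _ => rfl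
  | 1, i, _ => rfl
  | n+2, i, h => by
      obtain ⟨j, rfl⟩ : ∃ j, i = j + 2 := ⟨i - 2, by omega⟩
      rw [sig_succ_succ, sig_oob (n+1) (j+1) (by omega), LinearMap.lTensor_id]; rfl

/-- commutation of `σ₁` with a map on the last `W` factor of `V ⊗ (V ⊗ W)`. -/
lemma s1W_comm (W : Type u) [AddCommGroup W] [Module R W] (h : W →ₗ[R] W) :
    s1W σ W ∘ₗ LinearMap.lTensor V (LinearMap.lTensor V h)
      = LinearMap.lTensor V (LinearMap.lTensor V h) ∘ₗ s1W σ W := by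
  have h1 : (TensorProduct.assoc R V V W).symm.toLinearMap
        ∘ₗ LinearMap.lTensor V (LinearMap.lTensor V h)
      = LinearMap.lTensor (V ⊗[R] V) h ∘ₗ (TensorProduct.assoc R V V W).symm.toLinearMap :=
    symm_conj₂ _ _ _ _ (assoc_nat_right h)
  have h2 : LinearMap.rTensor W σ ∘ₗ LinearMap.lTensor (V ⊗[R] V) h
      = LinearMap.lTensor (V ⊗[R] V) h ∘ₗ LinearMap.rTensor W σ := by
    rw [LinearMap.rTensor_comp_lTensor, LinearMap.lTensor_comp_rTensor]
  have h3 : LinearMap.lTensor V (LinearMap.lTensor V h)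
        ∘ₗ (TensorProduct.assoc R V V W).toLinearMap
      = (TensorProduct.assoc R V V W).toLinearMap ∘ₗ LinearMap.lTensor (V ⊗[R] V) h :=
    assoc_nat_right h
  unfold s1W
  simp only [LinearMap.comp_assoc]
  rw [h1]
  rw [show LinearMap.rTensor W σ ∘ₗ (LinearMap.lTensor (V ⊗[R] V) h
        ∘ₗ (TensorProduct.assoc R V V W).symm.toLinearMap)
      = LinearMap.lTensor (V ⊗[R] V) h ∘ₗ (LinearMap.rTensor W σ
        ∘ₗ (TensorProduct.assoc R V V W).symm.toLinearMap) from by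
    rw [← LinearMap.comp_assoc, h2, LinearMap.comp_assoc]]
  rw [← LinearMap.comp_assoc, ← h3]
  simp only [LinearMap.comp_assoc]

lemma sig_comm_1 : ∀ n m, 3 ≤ m → sig σ n 1 ∘ₗ sig σ n m = sig σ n m ∘ₗ sig σ n 1 := by
  intro n m h3
  rcases le_or_gt n m with h | h
  · rw [sig_oob σ n m h]; simp
  · -- n > m ≥ 3 hence n ≥ 4
    obtain ⟨n', rfl⟩ : ∃ n', n = n' + 4 := ⟨n - 4, by omega⟩
    obtain ⟨m', rfl⟩ : ∃ m', m = m' + 3 := ⟨m - 3, by omega⟩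
    have e1 : sig σ (n'+4) (m'+3) =
        LinearMap.lTensor V (LinearMap.lTensor V (sig σ (n'+2) (m'+1))) := rfl
    rw [e1, sig_two_one]
    exact s1W_comm σ _ _

end Sig

section Braid
variable (σ : V ⊗[R] V →ₗ[R] V ⊗[R] V)
variable (W : Type u) [AddCommGroup W] [Module R W]

/-- reassociation iso `V ⊗ (V ⊗ (V ⊗ W)) ≃ (V ⊗ (V ⊗ V)) ⊗ W`. -/
noncomputable def Psi : V ⊗[R] (V ⊗[R] (V ⊗[R] W)) ≃ₗ[R] (V ⊗[R] (V ⊗[R] V)) ⊗[R] W :=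
  (TensorProduct.congr (LinearEquiv.refl R V) (TensorProduct.assoc R V V W).symm).trans
    (TensorProduct.assoc R V (V ⊗[R] V) W).symm

lemma psi_s1 : (Psi (R := R) (V := V) W).toLinearMap ∘ₗ s1W σ (V ⊗[R] W)
    = LinearMap.rTensor W (sigma1 σ) ∘ₗ (Psi (R := R) (V := V) W).toLinearMap := by
  apply TensorProduct.ext'
  intro x yzw
  induction yzw using TensorProduct.induction_on with
  | zero => simp
  | add u v hu hv => simp_all [tmul_add]
  | tmul y zw =>
    induction zw using TensorProduct.induction_on with
    | zero => simp
    | add u v hu hv => simp_all [tmul_add]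
    | tmul z w =>
      simp only [LinearMap.coe_comp, Function.comp_apply, LinearEquiv.coe_coe, s1W,
        TensorProduct.assoc_symm_tmul, LinearMap.rTensor_tmul, Psi, LinearEquiv.trans_apply,
        TensorProduct.congr_tmul, LinearEquiv.refl_apply, TensorProduct.assoc_tmul, sigma1]
      generalize σ (x ⊗ₜ[R] y) = u
      induction u using TensorProduct.induction_on with
      | zero => simp
      | add u v hu hv => simp [add_tmul, hu, hv]
      | tmul p q => simp

lemma psi_s2 : (Psi (R := R) (V := V) W).toLinearMap ∘ₗ LinearMap.lTensor V (s1W σ W)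
    = LinearMap.rTensor W (sigma2 σ) ∘ₗ (Psi (R := R) (V := V) W).toLinearMap := by
  apply TensorProduct.ext'
  intro x yzw
  induction yzw using TensorProduct.induction_on with
  | zero => simp
  | add u v hu hv => simp_all [tmul_add]
  | tmul y zw =>
    induction zw using TensorProduct.induction_on with
    | zero => simp
    | add u v hu hv => simp_all [tmul_add]
    | tmul z w =>
      simp [Psi, s1W, sigma2]

lemma braidW (hσ : YangBaxter σ) :
    s1W σ (V ⊗[R] W) ∘ₗ LinearMap.lTensor V (s1W σ W) ∘ₗ s1W σ (V ⊗[R] W)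
      = LinearMap.lTensor V (s1W σ W) ∘ₗ s1W σ (V ⊗[R] W) ∘ₗ LinearMap.lTensor V (s1W σ W) := by
  have e1 : ∀ x, (Psi (R := R) (V := V) W) (s1W σ (V ⊗[R] W) x)
      = LinearMap.rTensor W (sigma1 σ) (Psi (R := R) (V := V) W x) := by
    intro x
    have := LinearMap.congr_fun (psi_s1 σ W) x
    simpa using this
  have e2 : ∀ x, (Psi (R := R) (V := V) W) (LinearMap.lTensor V (s1W σ W) x)
      = LinearMap.rTensor W (sigma2 σ) (Psi (R := R) (V := V) W x) := by
    intro x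
    have := LinearMap.congr_fun (psi_s2 σ W) x
    simpa using this
  have key : ∀ y, LinearMap.rTensor W (sigma1 σ) (LinearMap.rTensor W (sigma2 σ)
        (LinearMap.rTensor W (sigma1 σ) y))
      = LinearMap.rTensor W (sigma2 σ) (LinearMap.rTensor W (sigma1 σ)
        (LinearMap.rTensor W (sigma2 σ) y)) := by
    intro y
    have h := congrArg (fun f => LinearMap.rTensor W f) hσ
    have := LinearMap.congr_fun h y
    simpa only [LinearMap.rTensor_comp, LinearMap.coe_comp, Function.comp_apply] using this
  apply LinearMap.ext; intro t
  apply (Psi (R := R) (V := V) W).injective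
  simp only [LinearMap.coe_comp, Function.comp_apply]
  rw [e1, e2, e1, e2, e1, e2]
  exact key _

end Braid

section SigRel
variable (σ : V ⊗[R] V →ₗ[R] V ⊗[R] V)

lemma sig_comm : ∀ (k n m : ℕ), k + 2 ≤ m →
    sig σ n k ∘ₗ sig σ n m = sig σ n m ∘ₗ sig σ n k
  | 0, n, m, _ => by rw [sig_zero]; simp
  | 1, n, m, h => sig_comm_1 σ n m h
  | k+2, n, m, h => by
      match n with
      | 0 => rfl
      | 1 => rfl
      | (n''+2) =>
        obtain ⟨m', rfl⟩ : ∃ m', m = m' + 2 := ⟨m - 2, by omega⟩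
        erw [sig_succ_succ, sig_succ_succ, ← LinearMap.lTensor_comp, ← LinearMap.lTensor_comp,
          sig_comm (k+1) (n''+1) (m'+1) (by omega)]

lemma sig_braid (hσ : YangBaxter σ) : ∀ (k n : ℕ), 1 ≤ k → k + 2 ≤ n →
    sig σ n k ∘ₗ sig σ n (k+1) ∘ₗ sig σ n k = sig σ n (k+1) ∘ₗ sig σ n k ∘ₗ sig σ n (k+1)
  | 0, n, h1, _ => absurd h1 (by omega)
  | 1, n, _, h2 => by
      obtain ⟨n', rfl⟩ : ∃ n', n = n' + 3 := ⟨n - 3, by omega⟩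
      exact braidW σ (TP R V n') hσ
  | k+1+1, n, _, h2 => by
      obtain ⟨n', rfl⟩ : ∃ n', n = n' + 2 := ⟨n - 2, by omega⟩
      erw [sig_succ_succ,
        show sig σ (n'+2) (k+3) = LinearMap.lTensor V (sig σ (n'+1) (k+2)) from rfl,
        ← LinearMap.lTensor_comp, ← LinearMap.lTensor_comp, ← LinearMap.lTensor_comp,
        ← LinearMap.lTensor_comp, sig_braid hσ (k+1) (n'+1) (by omega) (by omega)]

end SigRel

lemma pair_ctx {A B B' C P : Type u}
    [AddCommGroup A] [Module R A] [AddCommGroup B] [Module R B]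
    [AddCommGroup B'] [Module R B'] [AddCommGroup C] [Module R C]
    [AddCommGroup P] [Module R P]
    {f : B →ₗ[R] C} {g : A →ₗ[R] B} {f' : B' →ₗ[R] C} {g' : A →ₗ[R] B'}
    (h : f ∘ₗ g = f' ∘ₗ g') (X : P →ₗ[R] A) : f ∘ₗ (g ∘ₗ X) = f' ∘ₗ (g' ∘ₗ X) := by
  rw [← LinearMap.comp_assoc, h, LinearMap.comp_assoc]

/-- the shifted braid lift `σ₂ ∘ σ₃ ∘ ⋯ ∘ σ_i`. -/
noncomputable def bslide (σ : V ⊗[R] V →ₗ[R] V ⊗[R] V) (n : ℕ) :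
    (i : ℕ) → TP R V n →ₗ[R] TP R V n
  | 0 => LinearMap.id
  | 1 => LinearMap.id
  | i+2 => bslide σ n (i+1) ∘ₗ sig σ n (i+2)

section SlideRel
variable (σ : V ⊗[R] V →ₗ[R] V ⊗[R] V) (ε : V →ₗ[R] R)

lemma slide_step (n k : ℕ) (hk : 1 ≤ k) :
    slide σ n (k+1) = slide σ n k ∘ₗ sig σ n k := by
  match k, hk with
  | k+1, _ => rfl

lemma slide_level_zero : ∀ i, slide σ 0 i = LinearMap.id
  | 0 => rfl
  | 1 => rfl
  | i+2 => by
      rw [show slide σ 0 (i+2) = slide σ 0 (i+1) ∘ₗ sig σ 0 (i+1) from rfl,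
        slide_level_zero (i+1)]
      simp [show sig σ 0 (i+1) = LinearMap.id from rfl]

lemma bslide_level_one : ∀ i, bslide σ 1 i = LinearMap.id
  | 0 => rfl
  | 1 => rfl
  | i+2 => by
      rw [show bslide σ 1 (i+2) = bslide σ 1 (i+1) ∘ₗ sig σ 1 (i+2) from rfl,
        bslide_level_one (i+1)]
      simp [show sig σ 1 (i+2) = LinearMap.id from rfl]

lemma lTensor_slide : ∀ (n i : ℕ), LinearMap.lTensor V (slide σ n i) = bslide σ (n+1) i
  | n, 0 => by
      rw [show slide σ n 0 = LinearMap.id from rfl, LinearMap.lTensor_id]; rfl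
  | n, 1 => by
      rw [show slide σ n 1 = LinearMap.id from rfl, LinearMap.lTensor_id]; rfl
  | 0, i+2 => by
      rw [slide_level_zero σ (i+2), bslide_level_one σ (i+2), LinearMap.lTensor_id]; rfl
  | m+1, i+2 => by
      rw [show slide σ (m+1) (i+2) = slide σ (m+1) (i+1) ∘ₗ sig σ (m+1) (i+1) from rfl,
        LinearMap.lTensor_comp, lTensor_slide (m+1) (i+1), ← sig_succ_succ]
      rfl

lemma sig_comm_slide : ∀ (k m n : ℕ), k + 1 ≤ m →
    sig σ n m ∘ₗ slide σ n k = slide σ n k ∘ₗ sig σ n m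
  | 0, m, n, _ => by rw [show slide σ n 0 = LinearMap.id from rfl]; simp
  | 1, m, n, _ => by rw [show slide σ n 1 = LinearMap.id from rfl]; simp
  | k+2, m, n, h => by
      rw [show slide σ n (k+2) = slide σ n (k+1) ∘ₗ sig σ n (k+1) from rfl,
        ← LinearMap.comp_assoc, sig_comm_slide (k+1) m n (by omega),
        LinearMap.comp_assoc, ← sig_comm σ (k+1) n m (by omega),
        ← LinearMap.comp_assoc]

lemma sig_slide (hσ : YangBaxter σ) : ∀ (d k n : ℕ), 1 ≤ k → k + 2 + d ≤ n →
    sig σ n (k+1) ∘ₗ slide σ n (k+2+d) = slide σ n (k+2+d) ∘ₗ sig σ n k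
  | 0, k, n, hk, hn => by
      simp only [Nat.add_zero]
      rw [show slide σ n (k+2) = slide σ n (k+1) ∘ₗ sig σ n (k+1) from rfl,
        slide_step σ n k hk]
      simp only [← LinearMap.comp_assoc]
      rw [sig_comm_slide σ k (k+1) n (le_refl _)]
      simp only [LinearMap.comp_assoc]
      rw [← sig_braid σ hσ k n hk (by omega)]
  | d+1, k, n, hk, hn => by
      rw [show k+2+(d+1) = (k+2+d)+1 from rfl, slide_step σ n (k+2+d) (by omega),
        ← LinearMap.comp_assoc, sig_slide hσ d k n hk (by omega), LinearMap.comp_assoc,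
        sig_comm σ k n (k+2+d) (by omega), ← LinearMap.comp_assoc]

lemma slide_eq_sig1_bslide : ∀ (d n : ℕ), slide σ n (d+2) = sig σ n 1 ∘ₗ bslide σ n (d+1)
  | 0, n => by
      rw [show slide σ n 2 = slide σ n 1 ∘ₗ sig σ n 1 from rfl,
        show slide σ n 1 = LinearMap.id from rfl,
        show bslide σ n 1 = LinearMap.id from rfl]
      simp
  | d+1, n => by
      rw [show slide σ n (d+3) = slide σ n (d+2) ∘ₗ sig σ n (d+2) from rfl,
        slide_eq_sig1_bslide d n, LinearMap.comp_assoc,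
        ← show bslide σ n (d+2) = bslide σ n (d+1) ∘ₗ sig σ n (d+2) from rfl]

lemma keyL (hσ : YangBaxter σ) : ∀ (i n j : ℕ), 1 ≤ i → i < j → j ≤ n →
    bslide σ n i ∘ₗ slide σ n j = sig σ n 1 ∘ₗ bslide σ n (j-1) ∘ₗ slide σ n i
  | 0, _, _, h, _, _ => absurd h (by omega)
  | 1, n, j, _, hij, hj => by
      obtain ⟨d, rfl⟩ : ∃ d, j = d + 2 := ⟨j - 2, by omega⟩
      rw [show bslide σ n 1 = LinearMap.id from rfl, show slide σ n 1 = LinearMap.id from rfl]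
      simp only [LinearMap.id_comp, LinearMap.comp_id]
      rw [slide_eq_sig1_bslide σ d n, show d+2-1 = d+1 from rfl]
  | i'+2, n, j, _, hij, hj => by
      obtain ⟨d, rfl⟩ : ∃ d, j = (i'+1)+2+d := ⟨j - (i'+3), by omega⟩
      rw [show bslide σ n (i'+2) = bslide σ n (i'+1) ∘ₗ sig σ n (i'+2) from rfl,
        LinearMap.comp_assoc,
        show sig σ n (i'+2) ∘ₗ slide σ n ((i'+1)+2+d)
            = slide σ n ((i'+1)+2+d) ∘ₗ sig σ n (i'+1) from
          sig_slide σ hσ d (i'+1) n (by omega) (by omega),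
        ← LinearMap.comp_assoc,
        keyL hσ (i'+1) n ((i'+1)+2+d) (by omega) (by omega) (by omega),
        show slide σ n (i'+2) = slide σ n (i'+1) ∘ₗ sig σ n (i'+1) from rfl]
      simp only [LinearMap.comp_assoc]

end SlideRel

section Eps
variable (σ : V ⊗[R] V →ₗ[R] V ⊗[R] V) (ε : V →ₗ[R] R)

lemma eps1_lTensor (n : ℕ) (g : TP R V n →ₗ[R] TP R V n) :
    eps1 ε n ∘ₗ LinearMap.lTensor V g = g ∘ₗ eps1 ε n := by
  have H : ∀ (W : Type u) [AddCommGroup W] [Module R W] (g : W →ₗ[R] W),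
      ((TensorProduct.lid R W).toLinearMap ∘ₗ LinearMap.rTensor W ε) ∘ₗ LinearMap.lTensor V g
        = g ∘ₗ ((TensorProduct.lid R W).toLinearMap ∘ₗ LinearMap.rTensor W ε) := by
    intro W _ _ g
    rw [LinearMap.comp_assoc, LinearMap.rTensor_comp_lTensor, ← LinearMap.lTensor_comp_rTensor,
      ← LinearMap.comp_assoc, ← lid_nat g, LinearMap.comp_assoc]
  exact H _ g

lemma eps1_bslide (n i : ℕ) :
    slide σ n i ∘ₗ eps1 ε n = eps1 ε n ∘ₗ bslide σ (n+1) i := by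
  rw [← lTensor_slide]; exact (eps1_lTensor ε n _).symm

/-- generic form of `eps1` on `V ⊗ W`. -/
noncomputable def epsW (W : Type u) [AddCommGroup W] [Module R W] : V ⊗[R] W →ₗ[R] W :=
  (TensorProduct.lid R W).toLinearMap ∘ₗ LinearMap.rTensor W ε

lemma eps1_eq (n : ℕ) : eps1 ε n = epsW ε (TP R V n) := rfl

lemma epsW2_aux (W : Type u) [AddCommGroup W] [Module R W] (u : V ⊗[R] V) (w : W) :
    epsW ε W (epsW ε (V ⊗[R] W) ((TensorProduct.assoc R V V W) (u ⊗ₜ[R] w)))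
      = (TensorProduct.lid R R) (TensorProduct.map ε ε u) • w := by
  induction u using TensorProduct.induction_on with
  | zero => simp
  | add u v hu hv => simp [add_tmul, hu, hv, add_smul]
  | tmul p q => simp [epsW, smul_smul]

lemma epsW2_sig1 (W : Type u) [AddCommGroup W] [Module R W]
    (hε : ((TensorProduct.lid R R).toLinearMap ∘ₗ TensorProduct.map ε ε) ∘ₗ σ =
          (TensorProduct.lid R R).toLinearMap ∘ₗ TensorProduct.map ε ε) :
    (epsW ε W ∘ₗ epsW ε (V ⊗[R] W)) ∘ₗ s1W σ W = epsW ε W ∘ₗ epsW ε (V ⊗[R] W) := by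
  apply TensorProduct.ext'
  intro x yw
  induction yw using TensorProduct.induction_on with
  | zero => simp
  | add u v hu hv => simp_all [tmul_add]
  | tmul y w =>
    have hE := LinearMap.congr_fun hε (x ⊗ₜ[R] y)
    simp only [LinearMap.coe_comp, Function.comp_apply, LinearEquiv.coe_coe] at hE
    simp only [LinearMap.coe_comp, Function.comp_apply, LinearEquiv.coe_coe, s1W,
      TensorProduct.assoc_symm_tmul, LinearMap.rTensor_tmul]
    rw [epsW2_aux, hE]
    simp [epsW, smul_smul]

lemma eps2_sig1
    (hε : ((TensorProduct.lid R R).toLinearMap ∘ₗ TensorProduct.map ε ε) ∘ₗ σ =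
          (TensorProduct.lid R R).toLinearMap ∘ₗ TensorProduct.map ε ε) (n : ℕ) :
    (eps1 ε n ∘ₗ eps1 ε (n+1)) ∘ₗ sig σ (n+2) 1 = eps1 ε n ∘ₗ eps1 ε (n+1) := by
  exact epsW2_sig1 σ ε (TP R V n) hε

lemma face_rel (hσ : YangBaxter σ)
    (hε : ((TensorProduct.lid R R).toLinearMap ∘ₗ TensorProduct.map ε ε) ∘ₗ σ =
          (TensorProduct.lid R R).toLinearMap ∘ₗ TensorProduct.map ε ε)
    (n a b : ℕ) (hab : a ≤ b) (hbn : b ≤ n) :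
    face σ ε n (a+1) ∘ₗ face σ ε (n+1) (b+2) = face σ ε n (b+1) ∘ₗ face σ ε (n+1) (a+1) := by
  unfold face
  simp only [LinearMap.comp_assoc]
  rw [pair_ctx (eps1_bslide σ ε (n+1) (a+1)) (slide σ (n+2) (b+2)),
    keyL σ hσ (a+1) (n+2) (b+2) (by omega) (by omega) (by omega),
    show b+2-1 = b+1 from rfl]
  simp only [← LinearMap.comp_assoc]
  rw [eps2_sig1 σ ε hε n]
  simp only [LinearMap.comp_assoc]
  rw [pair_ctx (eps1_bslide σ ε (n+1) (b+1)).symm (slide σ (n+2) (a+1))]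

end Eps

section Sums
variable {M N P : Type u} [AddCommGroup M] [Module R M] [AddCommGroup N] [Module R N]
  [AddCommGroup P] [Module R P]

lemma sum_comp' {ι : Type} (s : Finset ι) (f : ι → (M →ₗ[R] N)) (g : P →ₗ[R] M) :
    (∑ i ∈ s, f i) ∘ₗ g = ∑ i ∈ s, f i ∘ₗ g := by
  apply LinearMap.ext; intro x
  simp [LinearMap.sum_apply]

lemma comp_sum' {ι : Type} (s : Finset ι) (g : M →ₗ[R] N) (f : ι → (P →ₗ[R] M)) :
    g ∘ₗ (∑ i ∈ s, f i) = ∑ i ∈ s, g ∘ₗ f i := by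
  apply LinearMap.ext; intro x
  simp [LinearMap.sum_apply]

end Sums

section DD
variable (σ : V ⊗[R] V →ₗ[R] V ⊗[R] V) (ε : V →ₗ[R] R)

lemma dd_expand (n : ℕ) : dbr σ ε n ∘ₗ dbr σ ε (n+1)
    = ∑ a ∈ Finset.range (n+1), ∑ b ∈ Finset.range (n+2),
        ((-1:R)^(a+b)) • (face σ ε n (a+1) ∘ₗ face σ ε (n+1) (b+1)) := by
  unfold dbr
  rw [sum_comp']
  refine Finset.sum_congr rfl fun a _ => ?_
  rw [LinearMap.smul_comp, comp_sum', Finset.smul_sum]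
  refine Finset.sum_congr rfl fun b _ => ?_
  rw [LinearMap.comp_smul, smul_smul, ← pow_add]

end DD

end BraidedAux

/-- for a pre-braided vector space `(V, σ)` and a braided character `ε`
(`(ε ⊗ ε) ∘ σ = ε ⊗ ε`), the maps `d_n = Σ_{i=1}^n (−1)^{i−1} ε₁ ∘ T^σ_{p_{i,n}}`
square to zero: `d_{n−1} ∘ d_n = 0`. -/
theorem braided_differential_squares_to_zero
    (σ : V ⊗[R] V →ₗ[R] V ⊗[R] V) (hσ : YangBaxter σ)
    (ε : V →ₗ[R] R)
    (hε : ((TensorProduct.lid R R).toLinearMap ∘ₗ TensorProduct.map ε ε) ∘ₗ σ =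
          (TensorProduct.lid R R).toLinearMap ∘ₗ TensorProduct.map ε ε) :
    ∀ n : ℕ, dbr σ ε n ∘ₗ dbr σ ε (n+1) = 0 := by
  intro n
  rw [BraidedAux.dd_expand σ ε n]
  set G : ℕ → ℕ → (TP R V (n+1+1) →ₗ[R] TP R V n) :=
    fun a b => face σ ε n (a+1) ∘ₗ face σ ε (n+1) (b+1) with hG
  have key : ∀ a b : ℕ, a ≤ b → b ≤ n → G a (b+1) = G b a := by
    intro a b h1 h2
    have h := BraidedAux.face_rel σ ε hσ hε n a b h1 h2
    exact h
  have hsplit : ∑ a ∈ Finset.range (n+1), ∑ b ∈ Finset.range (n+2), ((-1:R)^(a+b)) • G a b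
      = (∑ a ∈ Finset.range (n+1), ∑ b ∈ Finset.range (a+1), ((-1:R)^(a+b)) • G a b)
        + ∑ a ∈ Finset.range (n+1), ∑ b ∈ Finset.Ico a (n+1), (-(((-1:R)^(a+b)) • G b a)) := by
    rw [← Finset.sum_add_distrib]
    refine Finset.sum_congr rfl fun a ha => ?_
    simp only [Finset.mem_range] at ha
    rw [Finset.range_eq_Ico,
      ← Finset.sum_Ico_consecutive _ (Nat.zero_le (a+1)) (by omega : a+1 ≤ n+2),
      ← Finset.range_eq_Ico]
    congr 1
    rw [Finset.sum_Ico_eq_sum_range, Finset.sum_Ico_eq_sum_range,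
      show n+2-(a+1) = n+1-a by omega]
    refine Finset.sum_congr rfl fun i hi => ?_
    simp only [Finset.mem_range] at hi
    rw [show a+1+i = (a+i)+1 by omega, show a+((a+i)+1) = (a+(a+i))+1 by omega,
      pow_succ, mul_neg_one, neg_smul, key a (a+i) (by omega) (by omega)]
  rw [hsplit]
  have hneg : ∑ a ∈ Finset.range (n+1), ∑ b ∈ Finset.Ico a (n+1), (-(((-1:R)^(a+b)) • G b a))
      = -∑ a ∈ Finset.range (n+1), ∑ b ∈ Finset.Ico a (n+1), ((-1:R)^(a+b)) • G b a := by
    simp [Finset.sum_neg_distrib]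
  have hswap : ∑ a ∈ Finset.range (n+1), ∑ b ∈ Finset.Ico a (n+1), ((-1:R)^(a+b)) • G b a
      = ∑ a ∈ Finset.range (n+1), ∑ b ∈ Finset.range (a+1), ((-1:R)^(a+b)) • G a b := by
    rw [Finset.range_eq_Ico, Finset.sum_Ico_Ico_comm]
    simp only [← Finset.range_eq_Ico]
    refine Finset.sum_congr rfl fun a _ => Finset.sum_congr rfl fun b _ => ?_
    rw [Nat.add_comm b a]
  rw [hneg, hswap, add_neg_cancel]
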